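/- Let Θ be proper, lsc, strongly convex with modulus c₀ on a Hilbert space X, and consider exact-data iterates (xₙ, ξₙ) and noisy-data iterates (xₙ^δ, ξₙ^δ) produced by the respective iterations with step sizes chosen by the min-rule (same μ₀, μ₁, same {αₙ}) from the same initial data ξ₀^δ = ξ₀, x₀^δ = x₀, where ‖y^δ - y‖ ≤ δ. Then for each fixed n, ‖ξₙ^δ - ξₙ‖ → 0 and ‖xₙ^δ - xₙ‖ → 0 as δ → 0. -/

import Mathlib

open scoped InnerProductSpace
open ContinuousLinearMap

section Aux

lemma argmin_finite' {X : Type*} [NormedAddCommGroup X] [InnerProductSpace ℝ X]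
    (Θ : X → EReal)
    (hproper : (∀ z, Θ z ≠ ⊥) ∧ ∃ z, Θ z ≠ ⊤)
    (ξ₁ x₁ : X)
    (h1 : ∀ z, Θ x₁ - ((⟪ξ₁, x₁⟫_ℝ : ℝ) : EReal) ≤ Θ z - ((⟪ξ₁, z⟫_ℝ : ℝ) : EReal)) :
    ∃ r : ℝ, Θ x₁ = (r : EReal) := by
  have hb := hproper.1 x₁
  have ht : Θ x₁ ≠ ⊤ := by
    intro htop
    obtain ⟨z₀, hz₀⟩ := hproper.2
    have := h1 z₀
    rw [htop] at this
    rw [EReal.top_sub_coe, top_le_iff] at this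
    have : Θ z₀ = ⊤ := by
      by_contra hne
      lift Θ z₀ to ℝ using ⟨hne, hproper.1 z₀⟩ with r
      rw [show ((r:EReal) - ((⟪ξ₁, z₀⟫_ℝ : ℝ) : EReal)) = ((r - ⟪ξ₁, z₀⟫_ℝ : ℝ) : EReal) from by
        exact_mod_cast rfl] at this
      exact (EReal.coe_ne_top _) this
    exact hz₀ this
  lift Θ x₁ to ℝ using ⟨ht, hb⟩ with r
  exact ⟨r, rfl⟩

lemma strong_stab' {X : Type*} [NormedAddCommGroup X] [InnerProductSpace ℝ X]
    (Θ : X → EReal) (c₀ : ℝ)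
    (hproper : (∀ z, Θ z ≠ ⊥) ∧ ∃ z, Θ z ≠ ⊤)
    (hsc : ∀ (z x : X) (s : ℝ), 0 ≤ s → s ≤ 1 →
      Θ (s • z + (1 - s) • x) + ((c₀ * s * (1 - s) * ‖z - x‖ ^ 2 : ℝ) : EReal)
        ≤ (s : EReal) * Θ z + ((1 - s : ℝ) : EReal) * Θ x)
    (ξ₁ ξ₂ x₁ x₂ : X)
    (h1 : ∀ z, Θ x₁ - ((⟪ξ₁, x₁⟫_ℝ : ℝ) : EReal) ≤ Θ z - ((⟪ξ₁, z⟫_ℝ : ℝ) : EReal))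
    (h2 : ∀ z, Θ x₂ - ((⟪ξ₂, x₂⟫_ℝ : ℝ) : EReal) ≤ Θ z - ((⟪ξ₂, z⟫_ℝ : ℝ) : EReal)) :
    c₀ * ‖x₂ - x₁‖ ^ 2 ≤ ⟪ξ₂ - ξ₁, x₂ - x₁⟫_ℝ := by
  obtain ⟨a, ha⟩ := argmin_finite' Θ hproper ξ₁ x₁ h1
  obtain ⟨b, hb⟩ := argmin_finite' Θ hproper ξ₂ x₂ h2
  have hsc2 := hsc x₂ x₁ (1/2) (by norm_num) (by norm_num)
  rw [ha, hb] at hsc2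
  set m : X := (1/2 : ℝ) • x₂ + (1 - (1/2:ℝ)) • x₁ with hm
  have h4 : ((1/2 : ℝ) : EReal) * (b : EReal) + ((1 - 1/2 : ℝ) : EReal) * (a : EReal)
      = (((1/2) * b + (1 - 1/2) * a : ℝ) : EReal) := by exact_mod_cast rfl
  rw [h4] at hsc2
  have hmtop : Θ m ≠ ⊤ := by
    intro htop
    rw [htop, EReal.top_add_coe, top_le_iff] at hsc2
    exact (EReal.coe_ne_top _) hsc2
  obtain ⟨e, he⟩ : ∃ r : ℝ, Θ m = (r : EReal) := by
    have := hproper.1 m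
    lift Θ m to ℝ using ⟨hmtop, this⟩ with r; exact ⟨r, rfl⟩
  rw [he] at hsc2
  have hsc3 : e + c₀ * (1/2) * (1 - 1/2) * ‖x₂ - x₁‖ ^ 2 ≤ (1/2) * b + (1 - 1/2) * a := by
    rw [show ((e:EReal) + ((c₀ * (1/2) * (1 - 1/2) * ‖x₂ - x₁‖ ^ 2 : ℝ) : EReal))
        = ((e + c₀ * (1/2) * (1 - 1/2) * ‖x₂ - x₁‖ ^ 2 : ℝ) : EReal) from by
      exact_mod_cast rfl] at hsc2
    exact_mod_cast hsc2
  have h1m := h1 m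
  rw [ha, he] at h1m
  have h1r : a - ⟪ξ₁, x₁⟫_ℝ ≤ e - ⟪ξ₁, m⟫_ℝ := by exact_mod_cast h1m
  have h2m := h2 m
  rw [hb, he] at h2m
  have h2r : b - ⟪ξ₂, x₂⟫_ℝ ≤ e - ⟪ξ₂, m⟫_ℝ := by exact_mod_cast h2m
  have him1 : ⟪ξ₁, m⟫_ℝ = (1/2) * ⟪ξ₁, x₂⟫_ℝ + (1/2) * ⟪ξ₁, x₁⟫_ℝ := by
    rw [hm]; norm_num [inner_add_right, inner_smul_right]
  have him2 : ⟪ξ₂, m⟫_ℝ = (1/2) * ⟪ξ₂, x₂⟫_ℝ + (1/2) * ⟪ξ₂, x₁⟫_ℝ := by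
    rw [hm]; norm_num [inner_add_right, inner_smul_right]
  have hexp : ⟪ξ₂ - ξ₁, x₂ - x₁⟫_ℝ
      = ⟪ξ₂, x₂⟫_ℝ - ⟪ξ₂, x₁⟫_ℝ - ⟪ξ₁, x₂⟫_ℝ + ⟪ξ₁, x₁⟫_ℝ := by
    simp [inner_sub_left, inner_sub_right]; ring
  rw [hexp]
  nlinarith [hsc3, h1r, h2r, him1, him2]

lemma inv_selfadjoint {Y : Type*} [NormedAddCommGroup Y] [InnerProductSpace ℝ Y]
    [CompleteSpace Y]
    (S B : Y →L[ℝ] Y) (hsa : IsSelfAdjoint S) (hSB : S ∘L B = 1) :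
    ContinuousLinearMap.adjoint B = B := by
  have hS : ContinuousLinearMap.adjoint S = S := ContinuousLinearMap.isSelfAdjoint_iff'.mp hsa
  have h1 : ContinuousLinearMap.adjoint B ∘L S = 1 := by
    have := congrArg ContinuousLinearMap.adjoint hSB
    rw [ContinuousLinearMap.one_def, ContinuousLinearMap.adjoint_comp, hS,
      ContinuousLinearMap.adjoint_id] at this
    rw [← ContinuousLinearMap.one_def] at this
    exact this
  calc ContinuousLinearMap.adjoint B
      = ContinuousLinearMap.adjoint B ∘L (S ∘L B) := by rw [hSB]; rfl
    _ = (ContinuousLinearMap.adjoint B ∘L S) ∘L B := by rw [ContinuousLinearMap.comp_assoc]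
    _ = B := by rw [h1]; rfl

end Aux

/-- Stability. Let `(xₙ, ξₙ)` be exact-data iterates and, for each noise
level `δ > 0`, let `(xₙ^δ, ξₙ^δ)` be noisy-data iterates (same `μ₀, μ₁, {αₙ}`, same
initial `ξ₀`, data `y^δ` with `‖y^δ - y‖ ≤ δ`), with min-rule step sizes. Then for every
fixed `n`, `‖ξₙ^δ - ξₙ‖ → 0` and `‖xₙ^δ - xₙ‖ → 0` as `δ → 0⁺`. -/
theorem noisy_iterates_stability
    {X Y : Type*} [NormedAddCommGroup X] [InnerProductSpace ℝ X] [CompleteSpace X]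
    [NormedAddCommGroup Y] [InnerProductSpace ℝ Y] [CompleteSpace Y]
    (Θ : X → EReal) (c₀ : ℝ) (hc₀ : 0 < c₀)
    (hproper : (∀ z, Θ z ≠ ⊥) ∧ ∃ z, Θ z ≠ ⊤)
    (hlsc : LowerSemicontinuous Θ)
    (hsc : ∀ (z x : X) (s : ℝ), 0 ≤ s → s ≤ 1 →
      Θ (s • z + (1 - s) • x) + ((c₀ * s * (1 - s) * ‖z - x‖ ^ 2 : ℝ) : EReal)
        ≤ (s : EReal) * Θ z + ((1 - s : ℝ) : EReal) * Θ x)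
    (A : X →L[ℝ] Y) (y : Y)
    (α : ℕ → ℝ) (hαpos : ∀ n, 0 < α n) (hαdec : ∀ n, α (n + 1) ≤ α n)
    (S B : ℕ → (Y →L[ℝ] Y))
    (hSsa : ∀ n, IsSelfAdjoint (S n))
    (hSpos : ∀ n, ∀ w : Y, 0 ≤ ⟪S n w, w⟫_ℝ)
    (hSsq : ∀ n, S n ∘L S n = α n • (1 : Y →L[ℝ] Y) + A ∘L ContinuousLinearMap.adjoint A)
    (hBS : ∀ n, B n ∘L S n = 1) (hSB : ∀ n, S n ∘L B n = 1)
    (μ₀ μ₁ : ℝ) (hμ₀ : 0 < μ₀) (hμ₁ : 0 < μ₁)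
    -- exact-data iteration
    (ξ x : ℕ → X) (t : ℕ → ℝ)
    (hargmin : ∀ n, ∀ z : X,
      Θ (x n) - ((⟪ξ n, x n⟫_ℝ : ℝ) : EReal) ≤ Θ z - ((⟪ξ n, z⟫_ℝ : ℝ) : EReal))
    (ht : ∀ n, (A (x n) ≠ y →
        t n = min (μ₀ * ⟪B n (B n (A (x n) - y)), A (x n) - y⟫_ℝ /
          ‖ContinuousLinearMap.adjoint A (B n (B n (A (x n) - y)))‖ ^ 2) μ₁) ∧
      (A (x n) = y → 0 ≤ t n ∧ t n ≤ μ₁))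
    (hiter : ∀ n, ξ (n + 1)
      = ξ n - t n • ContinuousLinearMap.adjoint A (B n (B n (A (x n) - y))))
    -- noisy-data iterations, one for each δ > 0
    (yδ : ℝ → Y) (ξδ xδ : ℝ → ℕ → X) (tδ : ℝ → ℕ → ℝ)
    (hnoise : ∀ δ > (0 : ℝ), ‖yδ δ - y‖ ≤ δ)
    (hinit : ∀ δ > (0 : ℝ), ξδ δ 0 = ξ 0)
    (hargminδ : ∀ δ > (0 : ℝ), ∀ n, ∀ z : X,
      Θ (xδ δ n) - ((⟪ξδ δ n, xδ δ n⟫_ℝ : ℝ) : EReal)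
        ≤ Θ z - ((⟪ξδ δ n, z⟫_ℝ : ℝ) : EReal))
    (htδ : ∀ δ > (0 : ℝ), ∀ n, tδ δ n
      = min (μ₀ * ⟪B n (B n (A (xδ δ n) - yδ δ)), A (xδ δ n) - yδ δ⟫_ℝ /
          ‖ContinuousLinearMap.adjoint A (B n (B n (A (xδ δ n) - yδ δ)))‖ ^ 2) μ₁)
    (hiterδ : ∀ δ > (0 : ℝ), ∀ n, ξδ δ (n + 1)
      = ξδ δ n - tδ δ n • ContinuousLinearMap.adjoint A (B n (B n (A (xδ δ n) - yδ δ)))) :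
    ∀ n : ℕ,
      Filter.Tendsto (fun δ => ‖ξδ δ n - ξ n‖) (nhdsWithin 0 (Set.Ioi 0)) (nhds 0) ∧
      Filter.Tendsto (fun δ => ‖xδ δ n - x n‖) (nhdsWithin 0 (Set.Ioi 0)) (nhds 0) := by
  set L : Filter ℝ := nhdsWithin 0 (Set.Ioi 0) with hL
  have hBsa : ∀ n, ContinuousLinearMap.adjoint (B n) = B n :=
    fun n => inv_selfadjoint (S n) (B n) (hSsa n) (hSB n)
  have hBB : ∀ n (w : Y), ⟪B n (B n w), w⟫_ℝ = ‖B n w‖ ^ 2 := by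
    intro n w
    nth_rewrite 1 [← hBsa n]
    rw [ContinuousLinearMap.adjoint_inner_left, real_inner_self_eq_norm_sq]
  have hxbound : ∀ δ : ℝ, 0 < δ → ∀ n, ‖xδ δ n - x n‖ ≤ ‖ξδ δ n - ξ n‖ / c₀ := by
    intro δ hδ n
    have hk := strong_stab' Θ c₀ hproper hsc (ξ n) (ξδ δ n) (x n) (xδ δ n)
      (hargmin n) (hargminδ δ hδ n)
    have hcs : ⟪ξδ δ n - ξ n, xδ δ n - x n⟫_ℝ ≤ ‖ξδ δ n - ξ n‖ * ‖xδ δ n - x n‖ :=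
      real_inner_le_norm _ _
    rcases eq_or_lt_of_le (norm_nonneg (xδ δ n - x n)) with h0 | h0
    · rw [← h0]; positivity
    · rw [le_div_iff₀ hc₀]
      nlinarith [hk, hcs]
  have key : ∀ n, Filter.Tendsto (fun δ => ξδ δ n) L (nhds (ξ n)) := by
    intro n
    induction n with
    | zero =>
      exact Filter.Tendsto.congr'
        (Filter.eventually_of_mem self_mem_nhdsWithin fun δ hδ => (hinit δ hδ).symm)
        tendsto_const_nhds
    | succ n ih =>
      have hξnorm : Filter.Tendsto (fun δ => ‖ξδ δ n - ξ n‖) L (nhds 0) :=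
        tendsto_iff_norm_sub_tendsto_zero.mp ih
      have xtend : Filter.Tendsto (fun δ => xδ δ n) L (nhds (x n)) := by
        apply tendsto_iff_norm_sub_tendsto_zero.mpr
        apply squeeze_zero'
          (Filter.eventually_of_mem self_mem_nhdsWithin fun δ hδ => norm_nonneg _)
          (Filter.eventually_of_mem self_mem_nhdsWithin fun δ hδ => hxbound δ hδ n)
        have := hξnorm.div_const c₀; rw [zero_div] at this; exact this
      have ytend : Filter.Tendsto yδ L (nhds y) := by
        apply tendsto_iff_norm_sub_tendsto_zero.mpr
        apply squeeze_zero'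
          (Filter.eventually_of_mem self_mem_nhdsWithin fun δ hδ => norm_nonneg _)
          (Filter.eventually_of_mem self_mem_nhdsWithin fun δ hδ => hnoise δ hδ)
        exact Filter.tendsto_id.mono_right nhdsWithin_le_nhds
      have rtend : Filter.Tendsto (fun δ => A (xδ δ n) - yδ δ) L (nhds (A (x n) - y)) :=
        ((A.continuous.tendsto _).comp xtend).sub ytend
      have BBtend : Filter.Tendsto (fun δ => B n (B n (A (xδ δ n) - yδ δ))) L
          (nhds (B n (B n (A (x n) - y)))) :=
        ((B n).continuous.tendsto _).comp (((B n).continuous.tendsto _).comp rtend)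
      have vtend : Filter.Tendsto
          (fun δ => ContinuousLinearMap.adjoint A (B n (B n (A (xδ δ n) - yδ δ)))) L
          (nhds (ContinuousLinearMap.adjoint A (B n (B n (A (x n) - y))))) :=
        ((ContinuousLinearMap.adjoint A).continuous.tendsto _).comp BBtend
      have hEqiter : (fun δ => ξδ δ n - tδ δ n •
            ContinuousLinearMap.adjoint A (B n (B n (A (xδ δ n) - yδ δ))))
          =ᶠ[L] (fun δ => ξδ δ (n+1)) :=
        Filter.eventually_of_mem self_mem_nhdsWithin fun δ hδ => (hiterδ δ hδ n).symm
      have htbound : ∀ δ : ℝ, 0 < δ → 0 ≤ tδ δ n ∧ tδ δ n ≤ μ₁ := by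
        intro δ hδ
        rw [htδ δ hδ n]
        refine ⟨le_min ?_ hμ₁.le, min_le_right _ _⟩
        apply div_nonneg
        · apply mul_nonneg hμ₀.le
          rw [hBB n _]
          positivity
        · positivity
      by_cases hv : ContinuousLinearMap.adjoint A (B n (B n (A (x n) - y))) = 0
      · have hξ1 : ξ (n+1) = ξ n := by rw [hiter n, hv, smul_zero, sub_zero]
        rw [hξ1]
        apply Filter.Tendsto.congr' hEqiter
        have hsm : Filter.Tendsto (fun δ => tδ δ n •
            ContinuousLinearMap.adjoint A (B n (B n (A (xδ δ n) - yδ δ)))) L (nhds 0) := by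
          rw [tendsto_zero_iff_norm_tendsto_zero]
          apply squeeze_zero'
            (Filter.eventually_of_mem self_mem_nhdsWithin fun δ hδ => norm_nonneg _)
            (Filter.eventually_of_mem self_mem_nhdsWithin (fun δ hδ => ?_))
            (g := fun δ => μ₁ * ‖ContinuousLinearMap.adjoint A (B n (B n (A (xδ δ n) - yδ δ)))‖)
          · have := vtend.norm
            rw [hv, norm_zero] at this
            simpa using this.const_mul μ₁
          · rw [norm_smul, Real.norm_eq_abs, abs_of_nonneg (htbound δ hδ).1]
            exact mul_le_mul_of_nonneg_right (htbound δ hδ).2 (norm_nonneg _)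
        simpa using ih.sub hsm
      · have hrne : A (x n) - y ≠ 0 := by
          intro h
          apply hv
          rw [h]
          simp
        have hAx : A (x n) ≠ y := sub_ne_zero.mp hrne
        have htn := (ht n).1 hAx
        have hden : (‖ContinuousLinearMap.adjoint A (B n (B n (A (x n) - y)))‖ : ℝ) ^ 2 ≠ 0 :=
          pow_ne_zero 2 (norm_ne_zero_iff.mpr hv)
        have ttend : Filter.Tendsto (fun δ => tδ δ n) L (nhds (t n)) := by
          rw [htn]
          apply Filter.Tendsto.congr'
            (Filter.eventually_of_mem self_mem_nhdsWithin fun δ hδ => (htδ δ hδ n).symm)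
          exact Filter.Tendsto.min
            (Filter.Tendsto.div (tendsto_const_nhds.mul (BBtend.inner rtend))
              (vtend.norm.pow 2) hden)
            tendsto_const_nhds
        rw [hiter n]
        exact Filter.Tendsto.congr' hEqiter (ih.sub (ttend.smul vtend))
  intro n
  have hξnorm : Filter.Tendsto (fun δ => ‖ξδ δ n - ξ n‖) L (nhds 0) :=
    tendsto_iff_norm_sub_tendsto_zero.mp (key n)
  refine ⟨hξnorm, ?_⟩
  apply squeeze_zero'
    (Filter.eventually_of_mem self_mem_nhdsWithin fun δ hδ => norm_nonneg _)
    (Filter.eventually_of_mem self_mem_nhdsWithin fun δ hδ => hxbound δ hδ n)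
  have := hξnorm.div_const c₀; rw [zero_div] at this; exact this
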